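/- Let λ > −1/2 and let n ≥ 1 be an integer. Then the normalized Turán function satisfies φ_{n,λ}(1) = 1/(2λ + 1); equivalently, the derivative of the Turán determinant satisfies Δ_{n,λ}′(1) = −2/(2λ + 1). -/

import Mathlib

open Polynomial


/-- For `l > -1/2` and `n ≥ 1`, the normalized Turán function satisfies
`φ(1) = 1/(2l+1)`; equivalently, the Turán determinant `Δ = pₙ² - p_{n-1} p_{n+1}`
satisfies `Δ′(1) = -2/(2l+1)`. -/
theorem turan_normalized_value_at_one
    (l : ℝ) (hl : -(1/2 : ℝ) < l) (n : ℕ) (hn : 1 ≤ n)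
    (p : ℕ → Polynomial ℝ)
    (hp0 : p 0 = 1) (hp1 : p 1 = Polynomial.X)
    (hrec : ∀ m : ℕ, 1 ≤ m → ∀ x : ℝ,
      ((m : ℝ) + 2 * l) * (p (m + 1)).eval x
        = 2 * ((m : ℝ) + l) * x * (p m).eval x - (m : ℝ) * (p (m - 1)).eval x)
    (φ : Polynomial ℝ)
    (hφ : ∀ x : ℝ, (1 - x ^ 2) * φ.eval x
        = ((p n).eval x) ^ 2 - (p (n - 1)).eval x * (p (n + 1)).eval x) :
    φ.eval 1 = 1 / (2 * l + 1) ∧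
      (Polynomial.derivative ((p n) ^ 2 - p (n - 1) * p (n + 1))).eval 1
        = -2 / (2 * l + 1) := by
  have h2l : (2 * l + 1) ≠ 0 := by linarith
  have key : ∀ m : ℕ, C ((m : ℝ) + 1 + 2 * l) * p (m + 2)
      = C (2 * ((m : ℝ) + 1 + l)) * X * p (m + 1) - C ((m : ℝ) + 1) * p m := by
    intro m
    apply Polynomial.funext
    intro x
    have := hrec (m + 1) (by omega) x
    push_cast at this
    simp only [eval_mul, eval_sub, eval_C, eval_X]
    simpa using this
  have main : ∀ k : ℕ,
      ((p k).eval 1 = 1 ∧ (derivative (p k)).eval 1 = k * (k + 2 * l) / (2 * l + 1)) ∧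
      ((p (k+1)).eval 1 = 1 ∧
        (derivative (p (k+1))).eval 1 = (k+1) * ((k+1) + 2 * l) / (2 * l + 1)) := by
    intro k
    induction k with
    | zero =>
      refine ⟨⟨?_, ?_⟩, ?_, ?_⟩ <;> simp [hp0, hp1] <;> field_simp <;> try ring
    | succ k ih =>
      obtain ⟨⟨e0, d0⟩, e1, d1⟩ := ih
      have hne : ((k : ℝ) + 1 + 2 * l) ≠ 0 := by
        have : (0:ℝ) ≤ k := Nat.cast_nonneg k
        linarith
      refine ⟨⟨e1, by push_cast; exact d1⟩, ?_, ?_⟩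
      · have := congrArg (Polynomial.eval (1:ℝ)) (key k)
        simp only [eval_mul, eval_sub, eval_C, eval_X, e0, e1] at this
        have h : ((k : ℝ) + 1 + 2 * l) * (p (k+2)).eval 1 = ((k : ℝ) + 1 + 2 * l) * 1 := by
          rw [this]; ring
        have h2 := mul_left_cancel₀ hne h
        rw [show p (k+1+1) = p (k+2) from rfl, h2]
      · have := congrArg (fun q => (derivative q).eval (1:ℝ)) (key k)
        simp only [derivative_mul, derivative_C, derivative_sub, derivative_X,
          eval_mul, eval_sub, eval_add, eval_C, eval_X, zero_mul, mul_one, one_mul,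
          eval_zero, zero_add, e0, e1, d0, d1] at this
        have h : ((k : ℝ) + 1 + 2 * l) * (derivative (p (k+2))).eval 1
            = ((k : ℝ) + 1 + 2 * l) * (((k:ℝ)+2) * (((k:ℝ)+2) + 2 * l) / (2 * l + 1)) := by
          rw [this]; field_simp; ring
        have h2 := mul_left_cancel₀ hne h
        push_cast
        rw [show p (k+1+1) = p (k+2) from rfl, h2]
        ring
  obtain ⟨k, rfl⟩ : ∃ k, n = k + 1 := ⟨n - 1, by omega⟩
  obtain ⟨⟨e0, d0⟩, e1, d1⟩ := main k
  obtain ⟨⟨_, _⟩, e2, d2⟩ := main (k+1)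
  have hΔ : (Polynomial.derivative ((p (k+1)) ^ 2 - p (k+1-1) * p (k+1+1))).eval 1
      = -2 / (2 * l + 1) := by
    rw [show k + 1 - 1 = k from rfl]
    simp only [derivative_sub, derivative_pow, derivative_mul, eval_sub, eval_add,
      eval_mul, eval_pow, eval_natCast, eval_C, e0, e1, e2, d0, d1, d2]
    push_cast
    field_simp
    ring
  refine ⟨?_, hΔ⟩
  have hpoly : (1 - X ^ 2) * φ = (p (k+1)) ^ 2 - p (k+1-1) * p (k+1+1) := by
    apply Polynomial.funext
    intro x
    have := hφ x
    simp only [eval_mul, eval_sub, eval_pow, eval_one, eval_X]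
    simpa using this
  have hd := congrArg (fun q => (derivative q).eval (1:ℝ)) hpoly
  rw [hΔ] at hd
  simp only [derivative_mul, derivative_sub, derivative_one, derivative_pow,
    derivative_X, eval_add, eval_mul, eval_sub, eval_one, eval_X, eval_pow,
    eval_C, eval_zero] at hd
  norm_num at hd
  field_simp at hd ⊢
  linarith
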